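/- Let n ≥ 3 be an integer, let 1 ≤ a < b < n−a be integers, and let η = e^{2πi/n}. Then there is a (unique) polynomial D ∈ ℂ[X] satisfying (X−η^{a})(X−η^{−a})(X−η^{b})(X−η^{−b})·D(X) = ((η^{a}+η^{−a}−η^{b}−η^{−b})/n)·X(X²−1)(X^{n}−1); moreover D has real coefficients, D has degree n−1 with positive leading coefficient (2cos(2πa/n) − 2cos(2πb/n))/n > 0, 0 is a simple root of D, and 1 is a root of D of multiplicity exactly 2. -/

import Mathlib

open Polynomial

/-- For `n ≥ 3`, `1 ≤ a < b < n−a`, `η = e^{2πi/n}`, there is a unique polynomial `D ∈ ℂ[X]`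
with `(X−ηᵃ)(X−η⁻ᵃ)(X−ηᵇ)(X−η⁻ᵇ)·D = ((ηᵃ+η⁻ᵃ−ηᵇ−η⁻ᵇ)/n)·X(X²−1)(Xⁿ−1)`; moreover `D` has
real coefficients, degree `n−1` with positive leading coefficient
`(2cos(2πa/n) − 2cos(2πb/n))/n > 0`, `0` is a simple root of `D`, and `1` is a root of `D` of
multiplicity exactly `2`. -/
theorem genericDegree_I2ab (n : ℕ) (hn : 3 ≤ n) (a b : ℕ) (ha : 1 ≤ a) (hab : a < b)
    (hb : a + b < n) (η : ℂ) (hη : η = Complex.exp (2 * Real.pi * Complex.I / (n : ℂ))) :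
    (∃! D : ℂ[X],
      (X - C (η ^ a)) * (X - C ((η ^ a)⁻¹)) * (X - C (η ^ b)) * (X - C ((η ^ b)⁻¹)) * D =
        C ((η ^ a + (η ^ a)⁻¹ - η ^ b - (η ^ b)⁻¹) / (n : ℂ)) *
          (X * (X ^ 2 - 1) * (X ^ n - 1))) ∧
    ∀ D : ℂ[X],
      (X - C (η ^ a)) * (X - C ((η ^ a)⁻¹)) * (X - C (η ^ b)) * (X - C ((η ^ b)⁻¹)) * D =
        C ((η ^ a + (η ^ a)⁻¹ - η ^ b - (η ^ b)⁻¹) / (n : ℂ)) *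
          (X * (X ^ 2 - 1) * (X ^ n - 1)) →
      (∀ k, (D.coeff k).im = 0) ∧ D.natDegree = n - 1 ∧
        D.leadingCoeff =
          (((2 * Real.cos (2 * Real.pi * (a : ℝ) / (n : ℝ)) -
              2 * Real.cos (2 * Real.pi * (b : ℝ) / (n : ℝ))) / (n : ℝ) : ℝ) : ℂ) ∧
        0 < (2 * Real.cos (2 * Real.pi * (a : ℝ) / (n : ℝ)) -
              2 * Real.cos (2 * Real.pi * (b : ℝ) / (n : ℝ))) / (n : ℝ) ∧
        D.rootMultiplicity 0 = 1 ∧ D.rootMultiplicity 1 = 2 := by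
  have hn0 : (n : ℂ) ≠ 0 := Nat.cast_ne_zero.mpr (by omega)
  have hnR : (0:ℝ) < (n : ℝ) := by exact_mod_cast Nat.pos_of_ne_zero (by omega)
  have hprim : IsPrimitiveRoot η n := by
    rw [hη]; exact Complex.isPrimitiveRoot_exp n (by omega)
  have hη0 : η ≠ 0 := by rw [hη]; exact Complex.exp_ne_zero _
  have hpne1 : ∀ k : ℕ, 0 < k → k < n → η ^ k ≠ 1 := fun k h1 h2 =>
    hprim.pow_ne_one_of_pos_of_lt h1.ne' h2
  have hpowinv : ∀ k : ℕ, k ≤ n → (η ^ k)⁻¹ = η ^ (n - k) := by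
    intro k hk
    refine inv_eq_of_mul_eq_one_right ?_
    rw [← pow_add]
    have h : k + (n - k) = n := by omega
    rw [h, hprim.pow_eq_one]
  have hinva : (η ^ a)⁻¹ = η ^ (n - a) := hpowinv a (by omega)
  have hinvb : (η ^ b)⁻¹ = η ^ (n - b) := hpowinv b (by omega)
  have hexp : ∀ k : ℕ, η ^ k = Complex.exp (((2 * Real.pi * k / n : ℝ) : ℂ) * Complex.I) := by
    intro k
    rw [hη, ← Complex.exp_nat_mul]
    congr 1
    push_cast
    ring
  have key : ∀ r : ℝ, Complex.exp ((r:ℂ) * Complex.I) + (Complex.exp ((r:ℂ) * Complex.I))⁻¹ =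
      ((2 * Real.cos r : ℝ) : ℂ) := by
    intro r
    rw [← Complex.exp_neg, ← neg_mul, Complex.exp_mul_I, Complex.exp_mul_I,
      Complex.cos_neg, Complex.sin_neg]
    push_cast [← Complex.ofReal_cos]
    ring
  have hsum : ∀ k : ℕ, η ^ k + (η ^ k)⁻¹ = ((2 * Real.cos (2 * Real.pi * k / n) : ℝ) : ℂ) := by
    intro k
    rw [hexp k]
    exact key _
  have hconj : ∀ k : ℕ, (η ^ k)⁻¹ = (starRingEnd ℂ) (η ^ k) := by
    intro k
    apply Complex.inv_eq_conj
    rw [hexp k]; exact Complex.norm_exp_ofReal_mul_I _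
  set c : ℂ := (η ^ a + (η ^ a)⁻¹ - η ^ b - (η ^ b)⁻¹) / (n : ℂ) with hcdef
  set c' : ℝ := (2 * Real.cos (2 * Real.pi * (a : ℝ) / (n : ℝ)) -
      2 * Real.cos (2 * Real.pi * (b : ℝ) / (n : ℝ))) / (n : ℝ) with hc'def
  have hceq : c = (c' : ℂ) := by
    rw [hcdef, hc'def]
    have h1 := hsum a
    have h2 := hsum b
    rw [sub_sub, show (η ^ a + (η ^ a)⁻¹ - ((η ^ b) + (η ^ b)⁻¹)) = 
      (η ^ a + (η ^ a)⁻¹) - ((η ^ b) + (η ^ b)⁻¹) by ring, h1, h2]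
    push_cast
    ring
  have hc'pos : 0 < c' := by
    rw [hc'def]
    apply div_pos _ hnR
    have hnne : (n : ℝ) ≠ 0 := hnR.ne'
    have e1 : (2*Real.pi*(a:ℝ)/n + 2*Real.pi*(b:ℝ)/n)/2 = Real.pi*((a:ℝ)+b)/n := by
      field_simp
    have e2 : (2*Real.pi*(a:ℝ)/n - 2*Real.pi*(b:ℝ)/n)/2 = -(Real.pi*((b:ℝ)-a)/n) := by
      field_simp; ring
    have h := Real.cos_sub_cos (2*Real.pi*(a:ℝ)/n) (2*Real.pi*(b:ℝ)/n)
    rw [e1, e2, Real.sin_neg] at h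
    have haR : (1:ℝ) ≤ (a:ℝ) := by exact_mod_cast ha
    have habR : (a:ℝ) < (b:ℝ) := by exact_mod_cast hab
    have hbR : (a:ℝ) + (b:ℝ) < (n:ℝ) := by exact_mod_cast hb
    have hs1 : 0 < Real.sin (Real.pi*((a:ℝ)+b)/n) := by
      apply Real.sin_pos_of_pos_of_lt_pi
      · apply div_pos (mul_pos Real.pi_pos (by linarith)) hnR
      · rw [div_lt_iff₀ hnR]
        nlinarith [Real.pi_pos]
    have hs2 : 0 < Real.sin (Real.pi*((b:ℝ)-a)/n) := by
      apply Real.sin_pos_of_pos_of_lt_pi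
      · apply div_pos (mul_pos Real.pi_pos (by linarith)) hnR
      · rw [div_lt_iff₀ hnR]
        have hbn : (b:ℝ) < (n:ℝ) := by linarith
        nlinarith [Real.pi_pos]
    nlinarith [hs1, hs2]
  have hcne : c ≠ 0 := by rw [hceq]; exact Complex.ofReal_ne_zero.mpr hc'pos.ne'
  set P : ℂ[X] :=
    (X - C (η ^ a)) * (X - C ((η ^ a)⁻¹)) * (X - C (η ^ b)) * (X - C ((η ^ b)⁻¹)) with hPdef
  set M : ℂ[X] := X * (X ^ 2 - 1) * (X ^ n - 1) with hMdef
  -- divisibility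
  have hQ : ∀ s : Finset ℕ, s ⊆ Finset.range n →
      (∏ i ∈ s, (X - C (η ^ i))) ∣ (X ^ n - 1 : ℂ[X]) := by
    intro s hs
    have himg : nthRootsFinset n (1 : ℂ) = Finset.image (η ^ ·) (Finset.range n) := by
      symm
      apply Finset.eq_of_subset_of_card_le
      · intro x hx
        simp only [Finset.mem_image, Finset.mem_range] at hx
        obtain ⟨i, hi, rfl⟩ := hx
        rw [mem_nthRootsFinset (by omega : 0 < n) (1 : ℂ), ← pow_mul, mul_comm, pow_mul, hprim.pow_eq_one,
          one_pow]
      · rw [hprim.card_nthRootsFinset, Finset.card_image_of_injOn]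
        · simp
        · intro i hi j hj h
          exact hprim.pow_inj (Finset.mem_range.mp hi) (Finset.mem_range.mp hj) h
    rw [X_pow_sub_one_eq_prod (by omega : 0 < n) hprim, himg,
      Finset.prod_image (fun i hi j hj h =>
        hprim.pow_inj (Finset.mem_range.mp hi) (Finset.mem_range.mp hj) h)]
    exact Finset.prod_dvd_prod_of_subset s (Finset.range n) (fun i => X - C (η ^ i)) hs
  have hPdvd : P ∣ M := by
    rw [hPdef, hMdef, hinva, hinvb]
    rcases eq_or_ne (2 * b) n with h2b | h2b
    · have hb2 : η ^ (n - b) = -1 := by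
        have h1 : (η ^ (n - b)) ^ 2 = 1 := by
          rw [← pow_mul]
          have h : (n - b) * 2 = n := by omega
          rw [h, hprim.pow_eq_one]
        have h2 : η ^ (n - b) ≠ 1 := hpne1 _ (by omega) (by omega)
        rcases sq_eq_one_iff.mp h1 with h | h
        · exact absurd h h2
        · exact h
      have hQ3 : (X - C (η ^ a)) * (X - C (η ^ (n-a))) * (X - C (η ^ b)) ∣ (X ^ n - 1 : ℂ[X]) := by
        have := hQ {a, n-a, b} (by
          intro x hx
          simp only [Finset.mem_insert, Finset.mem_singleton] at hx
          simp only [Finset.mem_range]; omega)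
        rwa [Finset.prod_insert (by simp; omega), Finset.prod_insert (by simp; omega),
          Finset.prod_singleton, ← mul_assoc] at this
      have hX1 : (X - C (η ^ (n-b))) ∣ (X ^ 2 - 1 : ℂ[X]) := by
        rw [hb2]
        refine ⟨X - 1, ?_⟩
        simp only [map_neg, map_one]
        ring
      calc (X - C (η ^ a)) * (X - C (η ^ (n-a))) * (X - C (η ^ b)) * (X - C (η ^ (n-b)))
          ∣ (X ^ n - 1) * (X ^ 2 - 1) := mul_dvd_mul hQ3 hX1
        _ ∣ X * (X ^ 2 - 1) * (X ^ n - 1) := ⟨X, by ring⟩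
    · have h4 : (X - C (η ^ a)) * (X - C (η ^ (n-a))) * (X - C (η ^ b)) * (X - C (η ^ (n-b))) ∣
          (X ^ n - 1 : ℂ[X]) := by
        have := hQ {a, n-a, b, n-b} (by
          intro x hx
          simp only [Finset.mem_insert, Finset.mem_singleton] at hx
          simp only [Finset.mem_range]; omega)
        rwa [Finset.prod_insert (by simp; omega), Finset.prod_insert (by simp; omega),
          Finset.prod_insert (by simp; omega), Finset.prod_singleton, ← mul_assoc,
          ← mul_assoc] at this
      exact h4.trans ⟨X * (X^2 - 1), by ring⟩
  -- basic facts about P and M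
  have hPm : P.Monic := by
    rw [hPdef]
    exact (((monic_X_sub_C _).mul (monic_X_sub_C _)).mul (monic_X_sub_C _)).mul (monic_X_sub_C _)
  have hPne0 : P ≠ 0 := hPm.ne_zero
  have hPdeg : P.natDegree = 4 := by
    rw [hPdef]
    compute_degree!
  have hM2 : ((X:ℂ[X]) ^ 2 - 1).Monic := by
    simpa using monic_X_pow_sub_C (1:ℂ) (by norm_num : (2:ℕ) ≠ 0)
  have hMn : ((X:ℂ[X]) ^ n - 1).Monic := by
    simpa using monic_X_pow_sub_C (1:ℂ) (by omega : n ≠ 0)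
  have hMm : M.Monic := by
    rw [hMdef]
    exact (monic_X.mul hM2).mul hMn
  have hMne : M ≠ 0 := hMm.ne_zero
  have hMdeg : M.natDegree = n + 3 := by
    rw [hMdef, Monic.natDegree_mul (monic_X.mul hM2) hMn, Monic.natDegree_mul monic_X hM2,
      natDegree_X]
    have e2 : ((X:ℂ[X]) ^ 2 - 1).natDegree = 2 := by
      simpa using natDegree_X_pow_sub_C (n := 2) (r := (1:ℂ))
    have en : ((X:ℂ[X]) ^ n - 1).natDegree = n := by
      simpa using natDegree_X_pow_sub_C (n := n) (r := (1:ℂ))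
    rw [e2, en]
    omega
  have hRne : C c * M ≠ 0 := mul_ne_zero (C_ne_zero.mpr hcne) hMne
  -- the universal part
  have huniv : ∀ D : ℂ[X], P * D = C c * M →
      (∀ k, (D.coeff k).im = 0) ∧ D.natDegree = n - 1 ∧ D.leadingCoeff = (c' : ℂ) ∧
        0 < c' ∧ D.rootMultiplicity 0 = 1 ∧ D.rootMultiplicity 1 = 2 := by
    intro D hDeq
    have hDne : D ≠ 0 := right_ne_zero_of_mul (ne_of_eq_of_ne hDeq hRne)
    refine ⟨?_, ?_, ?_, hc'pos, ?_, ?_⟩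
    · -- real coefficients
      have hca : (starRingEnd ℂ) (η ^ a) = (η ^ a)⁻¹ := (hconj a).symm
      have hcb : (starRingEnd ℂ) (η ^ b) = (η ^ b)⁻¹ := (hconj b).symm
      have hcainv : (starRingEnd ℂ) ((η ^ a)⁻¹) = η ^ a := by rw [map_inv₀, hca, inv_inv]
      have hcbinv : (starRingEnd ℂ) ((η ^ b)⁻¹) = η ^ b := by rw [map_inv₀, hcb, inv_inv]
      have hcc : (starRingEnd ℂ) c = c := by rw [hceq]; exact Complex.conj_ofReal _
      have hDeq' := hDeq
      rw [hPdef, hMdef] at hDeq'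
      have hmap := congrArg (Polynomial.map (starRingEnd ℂ)) hDeq'
      simp only [Polynomial.map_mul, Polynomial.map_sub, Polynomial.map_pow,
        Polynomial.map_one, Polynomial.map_X, Polynomial.map_C, hca, hcb, hcainv, hcbinv,
        hcc] at hmap
      have hPD : P * Polynomial.map (starRingEnd ℂ) D = P * D := by
        calc P * Polynomial.map (starRingEnd ℂ) D
            = (X - C ((η ^ a)⁻¹)) * (X - C (η ^ a)) * (X - C ((η ^ b)⁻¹)) * (X - C (η ^ b)) *
                Polynomial.map (starRingEnd ℂ) D := by rw [hPdef]; ring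
          _ = C c * (X * (X ^ 2 - 1) * (X ^ n - 1)) := hmap
          _ = C c * M := by rw [hMdef]
          _ = P * D := hDeq.symm
      have hfix : Polynomial.map (starRingEnd ℂ) D = D := mul_left_cancel₀ hPne0 hPD
      intro k
      have := congrArg (fun p : ℂ[X] => p.coeff k) hfix
      simp only [coeff_map] at this
      exact (Complex.conj_eq_iff_im.mp this)
    · -- natDegree
      have h1 := natDegree_mul hPne0 hDne
      rw [hDeq, natDegree_mul (C_ne_zero.mpr hcne) hMne, natDegree_C, hMdeg, hPdeg] at h1
      omega
    · -- leading coefficient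
      have h1 := congrArg leadingCoeff hDeq
      simp only [leadingCoeff_mul, hPm.leadingCoeff, hMm.leadingCoeff, leadingCoeff_C,
        one_mul, mul_one] at h1
      rw [h1, hceq]
    · -- root multiplicity at 0
      have hrm := congrArg (rootMultiplicity 0) hDeq
      rw [rootMultiplicity_mul (ne_of_eq_of_ne hDeq hRne),
        rootMultiplicity_mul hRne, hMdef,
        rootMultiplicity_mul hMne,
        rootMultiplicity_mul (mul_ne_zero X_ne_zero hM2.ne_zero)] at hrm
      have hP0 : rootMultiplicity 0 P = 0 := by
        apply rootMultiplicity_eq_zero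
        rw [hPdef]
        simp only [IsRoot, eval_mul, eval_sub, eval_X, eval_C, zero_sub, mul_eq_zero,
          neg_eq_zero, inv_eq_zero, pow_eq_zero_iff', not_or]
        simp [hη0]
      have hC0 : rootMultiplicity 0 (C c) = 0 := rootMultiplicity_C c 0
      have hX0 : rootMultiplicity 0 (X : ℂ[X]) = 1 := by
        rw [show (X : ℂ[X]) = X - C 0 by simp]
        exact rootMultiplicity_X_sub_C_self
      have h20 : rootMultiplicity 0 ((X:ℂ[X]) ^ 2 - 1) = 0 :=
        rootMultiplicity_eq_zero (by simp [IsRoot])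
      have hn0' : rootMultiplicity 0 ((X:ℂ[X]) ^ n - 1) = 0 :=
        rootMultiplicity_eq_zero (by simp [IsRoot, zero_pow (by omega : n ≠ 0)])
      rw [hP0, hC0, hX0, h20, hn0'] at hrm
      omega
    · -- root multiplicity at 1
      have hrm := congrArg (rootMultiplicity 1) hDeq
      rw [rootMultiplicity_mul (ne_of_eq_of_ne hDeq hRne),
        rootMultiplicity_mul hRne, hMdef,
        rootMultiplicity_mul hMne,
        rootMultiplicity_mul (mul_ne_zero X_ne_zero hM2.ne_zero)] at hrm
      have hP1 : rootMultiplicity 1 P = 0 := by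
        apply rootMultiplicity_eq_zero
        rw [hPdef]
        simp only [IsRoot, eval_mul, eval_sub, eval_X, eval_C, mul_eq_zero, sub_eq_zero, not_or]
        refine ⟨⟨⟨?_, ?_⟩, ?_⟩, ?_⟩
        · exact fun h => hpne1 a (by omega) (by omega) h.symm
        · rw [hinva]; exact fun h => hpne1 (n-a) (by omega) (by omega) h.symm
        · exact fun h => hpne1 b (by omega) (by omega) h.symm
        · rw [hinvb]; exact fun h => hpne1 (n-b) (by omega) (by omega) h.symm
      have hC1 : rootMultiplicity 1 (C c) = 0 := rootMultiplicity_C c 1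
      have hX1 : rootMultiplicity 1 (X : ℂ[X]) = 0 :=
        rootMultiplicity_eq_zero (by simp [IsRoot])
      have h21 : rootMultiplicity 1 ((X:ℂ[X]) ^ 2 - 1) = 1 := by
        have hfac : ((X:ℂ[X]) ^ 2 - 1) = (X - C 1) * (X + C 1) := by
          rw [C_1]; ring
        rw [hfac, rootMultiplicity_mul (by rw [← hfac]; exact hM2.ne_zero),
          rootMultiplicity_X_sub_C_self]
        have : rootMultiplicity 1 ((X : ℂ[X]) + C 1) = 0 := by
          apply rootMultiplicity_eq_zero
          simp only [IsRoot, eval_add, eval_X, eval_C]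
          norm_num
        rw [this]
      have hn1 : rootMultiplicity 1 ((X:ℂ[X]) ^ n - 1) = 1 := by
        have hgeo : ((X:ℂ[X]) ^ n - 1) = (X - C 1) * ∑ i ∈ Finset.range n, X ^ i := by
          rw [C_1, ← geom_sum_mul]; ring
        have hev : (∑ i ∈ Finset.range n, (X:ℂ[X]) ^ i).eval 1 = (n : ℂ) := by
          simp [eval_geom_sum]
        rw [hgeo, rootMultiplicity_mul (by rw [← hgeo]; exact hMn.ne_zero),
          rootMultiplicity_X_sub_C_self]
        have : rootMultiplicity 1 (∑ i ∈ Finset.range n, (X:ℂ[X]) ^ i) = 0 := by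
          apply rootMultiplicity_eq_zero
          simp only [IsRoot, hev]
          exact hn0
        rw [this]
      rw [hP1, hC1, hX1, h21, hn1] at hrm
      omega
  -- existence and uniqueness
  obtain ⟨E, hE⟩ := hPdvd
  refine ⟨⟨C c * E, by rw [hE]; ring, ?_⟩, fun D hD => ?_⟩
  · intro y hy
    apply mul_left_cancel₀ hPne0
    rw [hy, hE]; ring
  · have h := huniv D hD
    exact ⟨h.1, h.2.1, h.2.2.1, h.2.2.2.1, h.2.2.2.2.1, h.2.2.2.2.2⟩
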